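/- arXiv:1905.12105 — 2 statements merged into one kernel-verified Lean document; each statement's English description precedes it below -/
import Mathlib

section
/- Let X ~ N(x, σ²I_n) and Y ~ N(x + δ, σ²I_n) with σ > 0 and δ ∈ ℝ^n nonzero, and let f : ℝ^n → {0,1} be measurable. If S = {z ∈ ℝ^n : ⟨δ, z⟩ ≤ β} for some β ∈ ℝ and P(f(X) = 1) ≥ P(X ∈ S), then P(f(Y) = 1) ≥ P(Y ∈ S). -/
open MeasureTheory ProbabilityTheory

/-- The standard normal cumulative distribution function Φ. -/
noncomputable def stdNormalCDF (x : ℝ) : ℝ :=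
  ((gaussianReal 0 1) (Set.Iic x)).toReal

/-- The inverse Φ⁻¹ of the standard normal cdf. -/
noncomputable def stdNormalCDFInv (y : ℝ) : ℝ :=
  Function.invFun stdNormalCDF y

/-- The isotropic Gaussian measure `N(μ, σ² Iₙ)` on `ℝⁿ`. -/
noncomputable def isoGaussian (n : ℕ) (μ : EuclideanSpace ℝ (Fin n)) (σ : ℝ) :
    Measure (EuclideanSpace ℝ (Fin n)) :=
  (Measure.pi fun i : Fin n => gaussianReal (μ i) ⟨σ ^ 2, sq_nonneg σ⟩).map
    (MeasurableEquiv.toLp 2 (Fin n → ℝ))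

/-- The empirical floor function `L̂` with parameters ρ, σ and `c`. -/
noncomputable def empiricalFloor (ρ σ c z : ℝ) : ℝ :=
  stdNormalCDF (stdNormalCDFInv (z - c) - 2 * ρ / σ) - c

/-- Empirical smoothing: `h̃(x) = (1/q) ∑ₘ h(x + εₘ)`. -/
noncomputable def empSmooth {n q : ℕ} (h : EuclideanSpace ℝ (Fin n) → Fin n → ℝ)
    (x : EuclideanSpace ℝ (Fin n)) (ε : Fin q → EuclideanSpace ℝ (Fin n)) :
    Fin n → ℝ :=
  fun i => (1 / q : ℝ) * ∑ m : Fin q, h (x + ε m) i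

/-- Population smoothing: `h̄(x) = E_{ε ~ N(0,σ²Iₙ)}[h(x + ε)]`. -/
noncomputable def popSmooth {n : ℕ} (σ : ℝ) (h : EuclideanSpace ℝ (Fin n) → Fin n → ℝ)
    (x : EuclideanSpace ℝ (Fin n)) : Fin n → ℝ :=
  fun i => ∫ ε, h (x + ε) i ∂(isoGaussian n 0 σ)

/-- `kthLargest v k` is the k-th largest entry of `v` (1-indexed). -/
noncomputable def kthLargest {n : ℕ} (v : Fin n → ℝ) (k : ℕ) : ℝ :=
  ((Finset.univ.val.map v).sort (· ≤ ·)).getD (n - k) 0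

/-- The descending ordinal rank of the entry `v i` in `v` (best rank among ties). -/
noncomputable def descRank {n : ℕ} (v : Fin n → ℝ) (i : Fin n) : ℕ :=
  (Finset.univ.filter fun j => v i < v j).card + 1

/-- `A` is a set of `K` indices carrying the `K` largest entries of `v`. -/
def IsTopKSet {n : ℕ} (v : Fin n → ℝ) (K : ℕ) (A : Finset (Fin n)) : Prop :=
  A.card = K ∧ ∀ i ∈ A, ∀ j ∉ A, v j ≤ v i

/-- Sparsification: the largest `⌈τ n⌉` entries are mapped to 1, the rest to 0. -/
noncomputable def sparsify {n : ℕ} (τ : ℝ) (v : Fin n → ℝ) : Fin n → ℝ :=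
  fun i => if kthLargest v ⌈τ * n⌉₊ ≤ v i then 1 else 0


open MeasureTheory ProbabilityTheory Real
open scoped ENNReal NNReal

lemma NP.lintegral_pi_prod {n : ℕ} {κ : Fin n → Type*} [∀ i, MeasurableSpace (κ i)]
    (μ : ∀ i, Measure (κ i)) [∀ i, SigmaFinite (μ i)]
    (g : ∀ i, κ i → ℝ≥0∞) (hg : ∀ i, Measurable (g i)) :
    ∫⁻ z, ∏ i, g i (z i) ∂Measure.pi μ = ∏ i, ∫⁻ t, g i t ∂μ i := by
  induction n with
  | zero => simp [lintegral_const, Measure.pi_univ]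
  | succ n ih =>
    have h := measurePreserving_piFinSuccAbove μ 0
    have hcomp := h.lintegral_comp_emb
      (MeasurableEquiv.piFinSuccAbove κ 0).measurableEmbedding
      (fun p => g 0 p.1 * ∏ j : Fin n, g ((0 : Fin (n+1)).succAbove j) (p.2 j))
    calc ∫⁻ z, ∏ i, g i (z i) ∂Measure.pi μ
        = ∫⁻ p, g 0 p.1 * ∏ j : Fin n, g ((0 : Fin (n+1)).succAbove j) (p.2 j)
            ∂(μ 0).prod (Measure.pi fun j => μ ((0 : Fin (n+1)).succAbove j)) := by
          rw [← hcomp]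
          refine lintegral_congr fun z => ?_
          rw [Fin.prod_univ_succ]
          simp [MeasurableEquiv.piFinSuccAbove, Fin.zero_succAbove, Fin.tail]
          rfl
      _ = (∫⁻ t, g 0 t ∂μ 0) * ∫⁻ w, ∏ j : Fin n, g ((0 : Fin (n+1)).succAbove j) (w j)
            ∂(Measure.pi fun j => μ ((0 : Fin (n+1)).succAbove j)) :=
          lintegral_prod_mul (hg 0).aemeasurable
            (Measurable.aemeasurable
              (Finset.measurable_prod _ fun j _ => (hg _).comp (measurable_pi_apply j)))
      _ = (∫⁻ t, g 0 t ∂μ 0) * ∏ j : Fin n, ∫⁻ t, g ((0 : Fin (n+1)).succAbove j) t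
            ∂μ ((0 : Fin (n+1)).succAbove j) := by
          rw [ih (fun j => μ ((0 : Fin (n+1)).succAbove j))
            (fun j => g ((0 : Fin (n+1)).succAbove j)) (fun j => hg _)]
      _ = ∏ i, ∫⁻ t, g i t ∂μ i := by
          rw [Fin.prod_univ_succ]
          simp [Fin.zero_succAbove]
          rfl

lemma NP.gaussianPDF_shift (m d : ℝ) {v : ℝ≥0} (hv : v ≠ 0) (t : ℝ) :
    gaussianPDF (m + d) v t
      = gaussianPDF m v t * ENNReal.ofReal (rexp ((d * (t - m) - d ^ 2 / 2) / v)) := by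
  rw [gaussianPDF, gaussianPDF,
    ← ENNReal.ofReal_mul (gaussianPDFReal_nonneg m v t)]
  congr 1
  have hv' : (v : ℝ) ≠ 0 := by exact_mod_cast hv
  simp only [gaussianPDFReal, mul_assoc, ← Real.exp_add]
  congr 2
  field_simp
  ring

lemma NP.gaussianReal_shift (m d : ℝ) {v : ℝ≥0} (hv : v ≠ 0) :
    gaussianReal (m + d) v
      = (gaussianReal m v).withDensity
          (fun t => ENNReal.ofReal (rexp ((d * (t - m) - d ^ 2 / 2) / v))) := by
  have hmeas : Measurable fun t : ℝ => ENNReal.ofReal (rexp ((d * (t - m) - d ^ 2 / 2) / v)) := by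
    fun_prop
  rw [gaussianReal_of_var_ne_zero _ hv, gaussianReal_of_var_ne_zero _ hv,
    ← withDensity_mul _ (measurable_gaussianPDF m v) hmeas]
  congr 1
  funext t
  exact NP.gaussianPDF_shift m d hv t

lemma NP.map_withDensity {α β : Type*} [MeasurableSpace α] [MeasurableSpace β]
    (e : α ≃ᵐ β) (ν : Measure α) (G : α → ℝ≥0∞) (hG : Measurable G) :
    (ν.withDensity G).map e = (ν.map e).withDensity (G ∘ e.symm) := by
  ext E hE
  rw [Measure.map_apply e.measurable hE, withDensity_apply _ (hE.preimage e.measurable),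
    withDensity_apply _ hE, setLIntegral_map hE (hG.comp e.symm.measurable) e.measurable]
  simp

lemma NP.pi_shift {n : ℕ} (m d : Fin n → ℝ) {v : ℝ≥0} (hv : v ≠ 0) :
    (Measure.pi fun i => gaussianReal (m i + d i) v)
      = (Measure.pi fun i => gaussianReal (m i) v).withDensity
          (fun z => ∏ i, ENNReal.ofReal (rexp ((d i * (z i - m i) - d i ^ 2 / 2) / v))) := by
  have hmeas : ∀ i, Measurable fun t : ℝ =>
      ENNReal.ofReal (rexp ((d i * (t - m i) - d i ^ 2 / 2) / v)) := fun i => by fun_prop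
  refine (Measure.pi_eq (μ := fun i => gaussianReal (m i + d i) v)
    (μ' := (Measure.pi fun i => gaussianReal (m i) v).withDensity
      (fun z => ∏ i, ENNReal.ofReal (rexp ((d i * (z i - m i) - d i ^ 2 / 2) / v))))
    fun s hs => ?_)
  set gd : Fin n → ℝ → ℝ≥0∞ :=
    fun i t => ENNReal.ofReal (rexp ((d i * (t - m i) - d i ^ 2 / 2) / v)) with hgd
  have hbox : MeasurableSet (Set.pi Set.univ s) := MeasurableSet.univ_pi hs
  rw [withDensity_apply _ hbox, ← lintegral_indicator hbox]
  have hind : ∀ z : Fin n → ℝ,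
      (Set.pi Set.univ s).indicator (fun z => ∏ i, gd i (z i)) z
        = ∏ i, (s i).indicator (gd i) (z i) := by
    intro z
    by_cases hz : z ∈ Set.pi Set.univ s
    · rw [Set.indicator_of_mem hz]
      exact Finset.prod_congr rfl fun i _ =>
        (Set.indicator_of_mem (hz i trivial) _).symm
    · rw [Set.indicator_of_notMem hz]
      obtain ⟨i, hi⟩ : ∃ i, z i ∉ s i := by
        by_contra hcon
        push_neg at hcon
        exact hz fun i _ => hcon i
      exact (Finset.prod_eq_zero (Finset.mem_univ i)
        (Set.indicator_of_notMem hi _)).symm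
  calc ∫⁻ z, (Set.pi Set.univ s).indicator (fun z => ∏ i, gd i (z i)) z
          ∂(Measure.pi fun i => gaussianReal (m i) v)
      = ∫⁻ z, ∏ i, (s i).indicator (gd i) (z i)
          ∂(Measure.pi fun i => gaussianReal (m i) v) := lintegral_congr hind
    _ = ∏ i, ∫⁻ t, (s i).indicator (gd i) t ∂gaussianReal (m i) v :=
        NP.lintegral_pi_prod (fun i => gaussianReal (m i) v)
          (fun i => (s i).indicator (gd i)) (fun i => (hmeas i).indicator (hs i))
    _ = ∏ i, gaussianReal (m i + d i) v (s i) := by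
        refine Finset.prod_congr rfl fun i _ => ?_
        rw [lintegral_indicator (hs i), NP.gaussianReal_shift (m i) (d i) hv,
          withDensity_apply _ (hs i)]

open RealInnerProductSpace in
lemma NP.isoGaussian_shift (n : ℕ) {σ : ℝ} (hσ : 0 < σ) (x δ : EuclideanSpace ℝ (Fin n)) :
    isoGaussian n (x + δ) σ = (isoGaussian n x σ).withDensity
      (fun z => ENNReal.ofReal (rexp ((⟪δ, z⟫ - (⟪δ, x⟫ + ⟪δ, δ⟫ / 2)) / σ ^ 2))) := by
  have hv : (⟨σ ^ 2, sq_nonneg σ⟩ : ℝ≥0) ≠ 0 := by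
    intro h
    exact (pow_pos hσ 2).ne' (congrArg NNReal.toReal h)
  set v : ℝ≥0 := (⟨σ ^ 2, sq_nonneg σ⟩ : ℝ≥0) with hvdef
  have hcoe : (v : ℝ) = σ ^ 2 := rfl
  have hGmeas : Measurable fun w : Fin n → ℝ =>
      ∏ i, ENNReal.ofReal (rexp ((δ i * (w i - x i) - δ i ^ 2 / 2) / v)) := by
    fun_prop
  unfold isoGaussian
  have hpi : (Measure.pi fun i : Fin n => gaussianReal ((x + δ) i) v)
      = (Measure.pi fun i : Fin n => gaussianReal (x i) v).withDensity
        (fun w => ∏ i, ENNReal.ofReal (rexp ((δ i * (w i - x i) - δ i ^ 2 / 2) / v))) := by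
    have h := NP.pi_shift (fun i => x i) (fun i => δ i) hv
    simpa using h
  rw [hpi, NP.map_withDensity _ _ _ hGmeas]
  congr 1
  funext z
  have hz : ∀ i, ((MeasurableEquiv.toLp 2 (Fin n → ℝ)).symm z) i = z i := fun i => rfl
  simp only [Function.comp_apply, hz]
  rw [← ENNReal.ofReal_prod_of_nonneg (fun i _ => Real.exp_nonneg _), ← Real.exp_sum]
  congr 1
  rw [← Finset.sum_div, hcoe]
  congr 1
  simp only [PiLp.inner_apply, RCLike.inner_apply, conj_trivial, mul_sub, pow_two]
  rw [Finset.sum_sub_distrib, Finset.sum_sub_distrib, ← Finset.sum_div]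
  simp only [mul_comm (z.ofLp _) (δ.ofLp _), mul_comm (x.ofLp _) (δ.ofLp _)]
  ring

open RealInnerProductSpace in
/-- Lemma 4.1 of Cohen et al.: for `X ~ N(x, σ²Iₙ)`, `Y ~ N(x+δ, σ²Iₙ)`,
`f : ℝⁿ → {0,1}` measurable and `S = {z : ⟨δ, z⟩ ≤ β}`,
if `P(f(X) = 1) ≥ P(X ∈ S)` then `P(f(Y) = 1) ≥ P(Y ∈ S)`. -/
theorem stmt4_halfspace_neyman_pearson_le
    (n : ℕ) (σ : ℝ) (hσ : 0 < σ)
    (x δ : EuclideanSpace ℝ (Fin n)) (hδ : δ ≠ 0)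
    (f : EuclideanSpace ℝ (Fin n) → ℝ) (hf : Measurable f)
    (hf01 : ∀ z, f z = 0 ∨ f z = 1)
    (β : ℝ) (S : Set (EuclideanSpace ℝ (Fin n)))
    (hS : S = {z | ⟪δ, z⟫ ≤ β})
    (hX : isoGaussian n x σ {z | f z = 1} ≥ isoGaussian n x σ S) :
    isoGaussian n (x + δ) σ {z | f z = 1} ≥ isoGaussian n (x + δ) σ S := by
  classical
  set μX := isoGaussian n x σ with hμX
  set μY := isoGaussian n (x + δ) σ with hμY
  set c : ℝ := ⟪δ, x⟫ + ⟪δ, δ⟫ / 2 with hc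
  set g : EuclideanSpace ℝ (Fin n) → ℝ≥0∞ :=
    fun z => ENNReal.ofReal (rexp ((⟪δ, z⟫ - c) / σ ^ 2)) with hg
  set t : ℝ≥0∞ := ENNReal.ofReal (rexp ((β - c) / σ ^ 2)) with ht
  have hD : μY = μX.withDensity g := NP.isoGaussian_shift n hσ x δ
  have hinner : Measurable fun z : EuclideanSpace ℝ (Fin n) => ⟪δ, z⟫ :=
    (continuous_const.inner continuous_id).measurable
  set A : Set (EuclideanSpace ℝ (Fin n)) := {z | f z = 1} with hA
  have hAm : MeasurableSet A := hf (measurableSet_singleton 1)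
  have hSm : MeasurableSet S := by
    rw [hS]
    exact hinner measurableSet_Iic
  haveI : IsProbabilityMeasure μX := by
    rw [hμX]
    unfold isoGaussian
    haveI : ∀ i, IsProbabilityMeasure (gaussianReal (x i) ⟨σ ^ 2, sq_nonneg σ⟩) :=
      fun i => ProbabilityTheory.instIsProbabilityMeasureGaussianReal _ _
    exact Measure.isProbabilityMeasure_map
      (MeasurableEquiv.toLp 2 (Fin n → ℝ)).measurable.aemeasurable
  have hgS : ∀ z ∈ S, g z ≤ t := by
    intro z hzS
    rw [hS] at hzS
    exact ENNReal.ofReal_le_ofReal (Real.exp_le_exp.2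
      ((div_le_div_iff_of_pos_right (by positivity)).2 (by simpa using sub_le_sub_right hzS c)))
  have hgSc : ∀ z ∉ S, t ≤ g z := by
    intro z hzS
    rw [hS] at hzS
    simp only [Set.mem_setOf_eq, not_le] at hzS
    exact ENNReal.ofReal_le_ofReal (Real.exp_le_exp.2
      ((div_le_div_iff_of_pos_right (by positivity)).2 (by linarith)))
  have hYS : μY (S \ A) ≤ t * μX (S \ A) := by
    rw [hD, withDensity_apply _ (hSm.diff hAm)]
    calc ∫⁻ z in S \ A, g z ∂μX
        ≤ ∫⁻ _ in S \ A, t ∂μX :=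
          setLIntegral_mono' (hSm.diff hAm) fun z hz => hgS z hz.1
      _ = t * μX (S \ A) := setLIntegral_const _ _
  have hYA : t * μX (A \ S) ≤ μY (A \ S) := by
    rw [hD, withDensity_apply _ (hAm.diff hSm)]
    calc t * μX (A \ S) = ∫⁻ _ in A \ S, t ∂μX := (setLIntegral_const _ _).symm
      _ ≤ ∫⁻ z in A \ S, g z ∂μX :=
          setLIntegral_mono' (hAm.diff hSm) fun z hz => hgSc z hz.2
  have hX' : μX (S \ A) ≤ μX (A \ S) := by
    have h1 : μX (S ∩ A) + μX (S \ A) = μX S := measure_inter_add_diff S hAm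
    have h2 : μX (A ∩ S) + μX (A \ S) = μX A := measure_inter_add_diff A hSm
    have hle : μX (S ∩ A) + μX (S \ A) ≤ μX (S ∩ A) + μX (A \ S) := by
      rw [h1, Set.inter_comm S A, h2]
      exact hX
    exact (ENNReal.add_le_add_iff_left (measure_ne_top μX _)).1 hle
  calc μY S = μY (S ∩ A) + μY (S \ A) := (measure_inter_add_diff S hAm).symm
    _ ≤ μY (S ∩ A) + t * μX (S \ A) := add_le_add le_rfl hYS
    _ ≤ μY (S ∩ A) + t * μX (A \ S) := add_le_add le_rfl (mul_le_mul_right hX' t)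
    _ ≤ μY (S ∩ A) + μY (A \ S) := add_le_add le_rfl hYA
    _ = μY (A ∩ S) + μY (A \ S) := by rw [Set.inter_comm]
    _ = μY A := measure_inter_add_diff A hSm
end

section
/- Let X ~ N(x, σ²I_n) and Y ~ N(x + δ, σ²I_n) with σ > 0 and δ ∈ ℝ^n nonzero, and let f : ℝ^n → {0,1} be measurable. If S = {z ∈ ℝ^n : ⟨δ, z⟩ ≥ β} for some β ∈ ℝ and P(f(X) = 1) ≤ P(X ∈ S), then P(f(Y) = 1) ≤ P(Y ∈ S). -/
open MeasureTheory ProbabilityTheory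

section NPAux

open Real
open scoped ENNReal NNReal

lemma my_lintegral_pi_prod : ∀ {m : ℕ} (μ : Fin m → Measure ℝ) [∀ i, SigmaFinite (μ i)]
    (h : Fin m → ℝ → ℝ≥0∞), (∀ i, Measurable (h i)) →
    ∫⁻ x, ∏ i, h i (x i) ∂Measure.pi μ = ∏ i, ∫⁻ y, h i y ∂(μ i) := by
  intro m
  induction m with
  | zero =>
    intro μ _ h _
    simp [Measure.pi_of_empty]
  | succ m ih =>
    intro μ _ h hh
    have mp := (measurePreserving_piFinSuccAbove μ 0).symm
      (MeasurableEquiv.piFinSuccAbove (fun _ : Fin (m+1) => ℝ) 0)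
    rw [mp.lintegral_map_equiv]
    simp only [MeasurableEquiv.piFinSuccAbove_symm_apply, Fin.insertNthEquiv, Equiv.coe_fn_mk,
      Fin.insertNth_zero, Fin.prod_univ_succ, Fin.cons_zero, Fin.cons_succ, Fin.zero_succAbove,
      cast_eq]
    have hmeas : Measurable (fun z : Fin m → ℝ => ∏ j : Fin m, h j.succ (z j)) :=
      Finset.measurable_prod _ (fun j _ => (hh j.succ).comp (measurable_pi_apply j))
    rw [lintegral_prod_mul (hh 0).aemeasurable hmeas.aemeasurable]
    rw [ih (fun j => μ j.succ) (fun j => h j.succ) (fun j => hh j.succ)]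

lemma my_map_withDensity {α β : Type*} [MeasurableSpace α] [MeasurableSpace β]
    (e : α ≃ᵐ β) (μ : Measure α) (g : β → ℝ≥0∞) (hg : Measurable g) :
    Measure.map e (μ.withDensity (g ∘ e)) = (Measure.map e μ).withDensity g := by
  ext s hs
  rw [Measure.map_apply e.measurable hs, withDensity_apply _ hs,
    withDensity_apply _ (e.measurable hs), setLIntegral_map hs hg e.measurable]
  rfl

lemma my_gaussian_shift (m c : ℝ) {σ : ℝ} (hσ : 0 < σ) :
    gaussianReal (m + c) ⟨σ ^ 2, sq_nonneg σ⟩ =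
      (gaussianReal m ⟨σ ^ 2, sq_nonneg σ⟩).withDensity
        (fun z => ENNReal.ofReal (rexp ((c * (z - m) - c ^ 2 / 2) / σ ^ 2))) := by
  have hσ2 : (σ : ℝ) ^ 2 ≠ 0 := pow_ne_zero _ hσ.ne'
  have hv : (⟨σ ^ 2, sq_nonneg σ⟩ : ℝ≥0) ≠ 0 := by
    intro h
    exact hσ2 (congrArg NNReal.toReal h)
  have hr : Measurable (fun z : ℝ => ENNReal.ofReal (rexp ((c * (z - m) - c ^ 2 / 2) / σ ^ 2))) := by
    fun_prop
  rw [gaussianReal_of_var_ne_zero _ hv, gaussianReal_of_var_ne_zero _ hv,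
    ← withDensity_mul (f := gaussianPDF m (⟨σ ^ 2, sq_nonneg σ⟩ : ℝ≥0)) _ (measurable_gaussianPDF _ _) hr]
  congr 1
  ext z
  simp only [Pi.mul_apply]
  unfold gaussianPDF
  refine Eq.trans ?_ (ENNReal.ofReal_mul (gaussianPDFReal_nonneg _ _ _))
  congr 1
  simp only [gaussianPDFReal, NNReal.coe_mk]
  change (√(2 * π * σ ^ 2))⁻¹ * rexp (-(z - (m + c)) ^ 2 / (2 * σ ^ 2)) = (√(2 * π * σ ^ 2))⁻¹ * rexp (-(z - m) ^ 2 / (2 * σ ^ 2)) * rexp ((c * (z - m) - c ^ 2 / 2) / σ ^ 2)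
  have hkey : rexp (-(z - (m + c)) ^ 2 / (2 * σ ^ 2)) =
      rexp (-(z - m) ^ 2 / (2 * σ ^ 2)) * rexp ((c * (z - m) - c ^ 2 / 2) / σ ^ 2) := by
    rw [← Real.exp_add]
    congr 1
    field_simp
    ring
  rw [hkey]
  ring

lemma my_r_meas (x δ : ℝ) (σ : ℝ) :
    Measurable (fun z : ℝ => ENNReal.ofReal (rexp ((δ * (z - x) - δ ^ 2 / 2) / σ ^ 2))) := by
  fun_prop

lemma my_pi_gaussian_shift {n : ℕ} (x δ : Fin n → ℝ) {σ : ℝ} (hσ : 0 < σ) :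
    (Measure.pi fun i => gaussianReal (x i + δ i) ⟨σ ^ 2, sq_nonneg σ⟩) =
      (Measure.pi fun i => gaussianReal (x i) ⟨σ ^ 2, sq_nonneg σ⟩).withDensity
        (fun z => ∏ i, ENNReal.ofReal (rexp ((δ i * (z i - x i) - δ i ^ 2 / 2) / σ ^ 2))) := by
  have : ∀ i, SigmaFinite (gaussianReal (x i + δ i) ⟨σ ^ 2, sq_nonneg σ⟩) := fun i => by
    have := instIsProbabilityMeasureGaussianReal (x i + δ i) ⟨σ ^ 2, sq_nonneg σ⟩
    infer_instance
  have : ∀ i, SigmaFinite (gaussianReal (x i) ⟨σ ^ 2, sq_nonneg σ⟩) := fun i => by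
    have := instIsProbabilityMeasureGaussianReal (x i) ⟨σ ^ 2, sq_nonneg σ⟩
    infer_instance
  refine Measure.pi_eq (fun s hs => ?_)
  rw [withDensity_apply _ (MeasurableSet.univ_pi hs),
    ← lintegral_indicator (MeasurableSet.univ_pi hs) _]
  have hind : ∀ z : Fin n → ℝ,
      (Set.pi Set.univ s).indicator
        (fun z => ∏ i, ENNReal.ofReal (rexp ((δ i * (z i - x i) - δ i ^ 2 / 2) / σ ^ 2))) z
      = ∏ i, (s i).indicator
          (fun y => ENNReal.ofReal (rexp ((δ i * (y - x i) - δ i ^ 2 / 2) / σ ^ 2))) (z i) := by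
    intro z
    by_cases hz : z ∈ Set.pi Set.univ s
    · rw [Set.indicator_of_mem hz]
      exact Finset.prod_congr rfl fun i _ => (Set.indicator_of_mem (hz i trivial)
        (fun y => ENNReal.ofReal (rexp ((δ i * (y - x i) - δ i ^ 2 / 2) / σ ^ 2)))).symm
    · rw [Set.indicator_of_notMem hz]
      rw [Set.mem_univ_pi] at hz
      push_neg at hz
      obtain ⟨i, hi⟩ := hz
      symm
      exact Finset.prod_eq_zero (Finset.mem_univ i) (Set.indicator_of_notMem hi _)
  simp_rw [hind]
  rw [my_lintegral_pi_prod _ _ (fun i => ((my_r_meas (x i) (δ i) σ)).indicator (hs i))]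
  refine Finset.prod_congr rfl fun i _ => ?_
  rw [lintegral_indicator (hs i) _, my_gaussian_shift _ _ hσ,
    withDensity_apply _ (hs i)]

lemma my_isoGaussian_shift {n : ℕ} (x δ : EuclideanSpace ℝ (Fin n)) {σ : ℝ} (hσ : 0 < σ) :
    isoGaussian n (x + δ) σ = (isoGaussian n x σ).withDensity
      (fun z => ∏ i, ENNReal.ofReal (rexp ((δ i * (z i - x i) - δ i ^ 2 / 2) / σ ^ 2))) := by
  unfold isoGaussian
  have hcoord : ∀ i, (x + δ) i = x i + δ i := fun i => rfl
  simp_rw [hcoord]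
  have hg : Measurable (fun z : EuclideanSpace ℝ (Fin n) =>
      ∏ i, ENNReal.ofReal (rexp ((δ i * (z i - x i) - δ i ^ 2 / 2) / σ ^ 2))) := by
    refine Finset.measurable_prod _ (fun i _ => ?_)
    exact (my_r_meas (x i) (δ i) σ).comp
      ((measurable_pi_apply i).comp (MeasurableEquiv.toLp 2 (Fin n → ℝ)).symm.measurable)
  rw [my_pi_gaussian_shift x δ hσ,
    ← my_map_withDensity (MeasurableEquiv.toLp 2 (Fin n → ℝ)) _ _ hg]
  rfl

end NPAux
open scoped ENNReal NNReal

open RealInnerProductSpace in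
/-- Lemma 4.2 of Cohen et al.: for `X ~ N(x, σ²Iₙ)`, `Y ~ N(x+δ, σ²Iₙ)`,
`f : ℝⁿ → {0,1}` measurable and `S = {z : ⟨δ, z⟩ ≥ β}`,
if `P(f(X) = 1) ≤ P(X ∈ S)` then `P(f(Y) = 1) ≤ P(Y ∈ S)`. -/
theorem stmt5_halfspace_neyman_pearson_ge
    (n : ℕ) (σ : ℝ) (hσ : 0 < σ)
    (x δ : EuclideanSpace ℝ (Fin n)) (hδ : δ ≠ 0)
    (f : EuclideanSpace ℝ (Fin n) → ℝ) (hf : Measurable f)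
    (hf01 : ∀ z, f z = 0 ∨ f z = 1)
    (β : ℝ) (S : Set (EuclideanSpace ℝ (Fin n)))
    (hS : S = {z | β ≤ ⟪δ, z⟫})
    (hX : isoGaussian n x σ {z | f z = 1} ≤ isoGaussian n x σ S) :
    isoGaussian n (x + δ) σ {z | f z = 1} ≤ isoGaussian n (x + δ) σ S := by
  classical
  set μ := isoGaussian n x σ with hμ
  set E : Set (EuclideanSpace ℝ (Fin n)) := {z | f z = 1} with hEdef
  set C : ℝ := ∑ i, (δ i * x i + δ i ^ 2 / 2) with hC
  set g : EuclideanSpace ℝ (Fin n) → ℝ≥0∞ :=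
    fun z => ENNReal.ofReal (Real.exp ((⟪δ, z⟫ - C) / σ ^ 2)) with hgdef
  have hinner : ∀ z : EuclideanSpace ℝ (Fin n), ⟪δ, z⟫ = ∑ i, δ i * z i := by
    intro z
    simp [PiLp.inner_apply, RCLike.inner_apply, conj_trivial, mul_comm]
  have hGg : ∀ z : EuclideanSpace ℝ (Fin n),
      (∏ i, ENNReal.ofReal (Real.exp ((δ i * (z i - x i) - δ i ^ 2 / 2) / σ ^ 2))) = g z := by
    intro z
    rw [hgdef]
    rw [← ENNReal.ofReal_prod_of_nonneg (fun i _ => (Real.exp_pos _).le)]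
    congr 1
    rw [← Real.exp_sum]
    congr 1
    rw [← Finset.sum_div, hinner, hC, ← Finset.sum_sub_distrib]
    congr 1
    refine Finset.sum_congr rfl fun i _ => ?_
    ring
  have hdens : isoGaussian n (x + δ) σ = μ.withDensity g := by
    rw [hμ, my_isoGaussian_shift x δ hσ]
    congr 1
    funext z
    exact hGg z
  have hinnm : Measurable (fun z : EuclideanSpace ℝ (Fin n) => (⟪δ, z⟫ : ℝ)) :=
    (continuous_const.inner continuous_id).measurable
  have hE : MeasurableSet E := hf (measurableSet_singleton 1)
  have hSm : MeasurableSet S := by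
    rw [hS]
    exact measurableSet_le measurable_const hinnm
  have hprob : IsProbabilityMeasure μ := by
    rw [hμ]
    unfold isoGaussian
    have : ∀ i, IsProbabilityMeasure (gaussianReal (x i) ⟨σ ^ 2, sq_nonneg σ⟩) := fun i =>
      instIsProbabilityMeasureGaussianReal (x i) ⟨σ ^ 2, sq_nonneg σ⟩
    exact Measure.isProbabilityMeasure_map
      (MeasurableEquiv.measurable _).aemeasurable
  have hfin : μ (E ∩ S) ≠ ⊤ := measure_ne_top μ _
  have hdiff : μ (E \ S) ≤ μ (S \ E) := by
    have h1 : μ (E ∩ S) + μ (E \ S) = μ E := measure_inter_add_diff E hSm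
    have h2 : μ (S ∩ E) + μ (S \ E) = μ S := measure_inter_add_diff S hE
    rw [Set.inter_comm] at h2
    have hx' : μ (E ∩ S) + μ (E \ S) ≤ μ (E ∩ S) + μ (S \ E) := by
      rw [h1, h2]
      exact hX
    exact (ENNReal.add_le_add_iff_left hfin).mp hx'
  set t : ℝ≥0∞ := ENNReal.ofReal (Real.exp ((β - C) / σ ^ 2)) with ht
  have hσ2 : (0:ℝ) < σ ^ 2 := by positivity
  have key : (μ.withDensity g) (E \ S) ≤ (μ.withDensity g) (S \ E) := by
    rw [withDensity_apply _ (hE.diff hSm), withDensity_apply _ (hSm.diff hE)]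
    calc ∫⁻ z in E \ S, g z ∂μ ≤ ∫⁻ _ in E \ S, t ∂μ := by
          refine setLIntegral_mono' (hE.diff hSm) (fun z hz => ?_)
          have hzS : ⟪δ, z⟫ ≤ β := by
            have := hz.2
            rw [hS] at this
            exact (not_le.mp this).le
          refine ENNReal.ofReal_le_ofReal (Real.exp_le_exp.mpr ?_)
          gcongr
      _ = t * μ (E \ S) := setLIntegral_const _ _
      _ ≤ t * μ (S \ E) := mul_le_mul_right hdiff t
      _ = ∫⁻ _ in S \ E, t ∂μ := (setLIntegral_const _ _).symm
      _ ≤ ∫⁻ z in S \ E, g z ∂μ := by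
          refine setLIntegral_mono' (hSm.diff hE) (fun z hz => ?_)
          have hzS : β ≤ ⟪δ, z⟫ := by
            have := hz.1
            rw [hS] at this
            exact this
          refine ENNReal.ofReal_le_ofReal (Real.exp_le_exp.mpr ?_)
          gcongr
  rw [hdens]
  calc (μ.withDensity g) E
      = (μ.withDensity g) (E ∩ S) + (μ.withDensity g) (E \ S) :=
        (measure_inter_add_diff E hSm).symm
    _ ≤ (μ.withDensity g) (E ∩ S) + (μ.withDensity g) (S \ E) := add_le_add le_rfl key
    _ = (μ.withDensity g) (S ∩ E) + (μ.withDensity g) (S \ E) := by rw [Set.inter_comm]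
    _ = (μ.withDensity g) S := measure_inter_add_diff S hE
end
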